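/- Let K be a primary pseudoperfect number divisible by 6 such that K + 1 and K² + K + 1 are prime, and set K' := K(K+1), K'' := K'(K'+1). Then K, K', K'' are congruent to K, K + 36, K + 72 modulo 864, respectively. -/

import Mathlib

def IsPPN (K : ℕ) : Prop :=
  1 < K ∧ (1 : ℚ) / K + ∑ p ∈ K.primeFactors, (1 : ℚ) / p = 1

lemma ppn_sum_div (K : ℕ) (hK : IsPPN K) :
    ∑ p ∈ K.primeFactors, K / p = K - 1 := by
  obtain ⟨h1, h2⟩ := hK
  have hK0 : (K : ℚ) ≠ 0 := by
    exact_mod_cast (by omega : K ≠ 0)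
  have hsum : ∑ p ∈ K.primeFactors, (1 : ℚ) / p = 1 - 1 / K := by linarith
  have hterm : ∀ p ∈ K.primeFactors, ((K / p : ℕ) : ℚ) = (K : ℚ) * (1 / p) := by
    intro p hp
    have hpd : p ∣ K := Nat.dvd_of_mem_primeFactors hp
    have hp0 : (p : ℚ) ≠ 0 := by
      exact_mod_cast (Nat.prime_of_mem_primeFactors hp).ne_zero
    rw [Nat.cast_div hpd hp0]
    ring
  have hcast : ((∑ p ∈ K.primeFactors, K / p : ℕ) : ℚ) = ((K - 1 : ℕ) : ℚ) := by
    rw [Nat.cast_sum, Finset.sum_congr rfl hterm, ← Finset.mul_sum, hsum,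
      Nat.cast_sub (by omega)]
    field_simp
    rw [Nat.cast_one]
  exact_mod_cast hcast

lemma ppn_mod_fact (K r : ℕ) (hK : IsPPN K) (hr : r ∈ K.primeFactors) :
    ∃ t, K - 1 = K / r + r * t := by
  have hsplit : K / r + ∑ p ∈ K.primeFactors.erase r, K / p
      = ∑ p ∈ K.primeFactors, K / p := Finset.add_sum_erase _ _ hr
  have hrp : r.Prime := Nat.prime_of_mem_primeFactors hr
  have hrd : r ∣ K := Nat.dvd_of_mem_primeFactors hr
  have hdvd : r ∣ ∑ p ∈ K.primeFactors.erase r, K / p := by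
    refine Finset.dvd_sum fun p hp => ?_
    have hne : p ≠ r := Finset.ne_of_mem_erase hp
    have hpp : p.Prime := Nat.prime_of_mem_primeFactors (Finset.mem_of_mem_erase hp)
    have hpd : p ∣ K := Nat.dvd_of_mem_primeFactors (Finset.mem_of_mem_erase hp)
    have hcop : Nat.Coprime r p := (Nat.coprime_primes hrp hpp).mpr (Ne.symm hne)
    have : r ∣ K / p * p := by rw [Nat.div_mul_cancel hpd]; exact hrd
    exact hcop.dvd_of_dvd_mul_right this
  obtain ⟨t, ht⟩ := hdvd
  exact ⟨t, by rw [← ppn_sum_div K hK, ← hsplit, ht]⟩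

lemma ppn_mod_36 (K : ℕ) (hK : IsPPN K) (h6 : 6 ∣ K) : K % 36 = 6 := by
  have h1 := hK.1
  have h2 : 2 ∣ K := dvd_trans ⟨3, rfl⟩ h6
  have h3 : 3 ∣ K := dvd_trans ⟨2, rfl⟩ h6
  have h2m : (2 : ℕ) ∈ K.primeFactors :=
    Nat.mem_primeFactors.mpr ⟨Nat.prime_two, h2, by omega⟩
  have h3m : (3 : ℕ) ∈ K.primeFactors :=
    Nat.mem_primeFactors.mpr ⟨Nat.prime_three, h3, by omega⟩
  obtain ⟨t, ht⟩ := ppn_mod_fact K 2 hK h2m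
  obtain ⟨u, hu⟩ := ppn_mod_fact K 3 hK h3m
  obtain ⟨s, hs⟩ := h2
  obtain ⟨v, hv⟩ := h3
  rw [hs] at ht
  rw [hv] at hu
  rw [Nat.mul_div_cancel_left s (by norm_num)] at ht
  rw [Nat.mul_div_cancel_left v (by norm_num)] at hu
  omega

lemma step_mod_864 (n : ℕ) (hn : n % 36 = 6) :
    n * (n + 1) ≡ n + 36 [MOD 864] := by
  obtain ⟨a, ha⟩ : ∃ a, n = 36 * a + 6 := ⟨n / 36, by omega⟩
  rcases Nat.even_or_odd a with ⟨b, hb⟩ | ⟨b, hb⟩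
  · have : n * (n + 1) = (n + 36) + 864 * (b * (6 * b + 1)) := by
      subst ha; subst hb; ring
    unfold Nat.ModEq
    omega
  · have : n * (n + 1) = (n + 36) + 864 * ((2 * b + 1) * (3 * b + 2)) := by
      subst ha; subst hb; ring
    unfold Nat.ModEq
    omega

theorem ppn_triple_mod_864 (K : ℕ) (hK : IsPPN K) (h6 : 6 ∣ K)
    (hp : Nat.Prime (K + 1)) (hq : Nat.Prime (K ^ 2 + K + 1)) :
    K * (K + 1) ≡ K + 36 [MOD 864] ∧
    (K * (K + 1)) * (K * (K + 1) + 1) ≡ K + 72 [MOD 864] := by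
  have h36 := ppn_mod_36 K hK h6
  have h1 : K * (K + 1) ≡ K + 36 [MOD 864] := step_mod_864 K h36
  refine ⟨h1, ?_⟩
  have h36' : (K * (K + 1)) % 36 = 6 := by
    have := h1
    unfold Nat.ModEq at this
    omega
  have h2 : (K * (K + 1)) * (K * (K + 1) + 1) ≡ K * (K + 1) + 36 [MOD 864] :=
    step_mod_864 _ h36'
  calc (K * (K + 1)) * (K * (K + 1) + 1) ≡ K * (K + 1) + 36 [MOD 864] := h2
    _ ≡ (K + 36) + 36 [MOD 864] := h1.add_right 36
    _ = K + 72 := by ring
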